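/- arXiv:2305.08331 — 2 statements merged into one kernel-verified Lean document; each statement's English description precedes it below -/
import Mathlib

section
/- Every 18-vertex C4-free Halin graph H satisfies e(H) ≤ 28. -/
open SimpleGraph

/-- Degree of a vertex as the `ncard` of its neighbour set. -/
noncomputable def ncDeg {V : Type*} (G : SimpleGraph V) (v : V) : ℕ :=
  (G.neighborSet v).ncard

/-- A leaf is a vertex of degree one. -/
def IsLeaf {V : Type*} (G : SimpleGraph V) (v : V) : Prop :=
  ncDeg G v = 1

/-- A Halin graph, presented by its characteristic tree `T` and outer cycle `C`.
The underlying graph is `T ⊔ C`.  The outer cycle is a `2`-regular connected graph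
whose support is exactly the set of leaves of `T`, every non-leaf of `T` has degree
at least three, and the cycle is compatible with a planar embedding: for every edge
`uv` of `T`, the leaves lying in each component of `T - uv` are consecutive on the
cycle, i.e. they induce a connected subgraph of the cycle. -/
structure HalinGraph (V : Type*) [Fintype V] : Type _ where
  /-- the characteristic tree -/
  T : SimpleGraph V
  /-- the outer cycle -/
  C : SimpleGraph V
  tree_isTree : T.IsTree
  four_le_card : 4 ≤ Fintype.card V
  nonleaf_degree : ∀ v : V, ¬ IsLeaf T v → 3 ≤ ncDeg T v
  support_C : C.support = {v : V | IsLeaf T v}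
  two_regular : ∀ v ∈ C.support, ncDeg C v = 2
  cycle_connected : (C.induce C.support).Connected
  planar : ∀ u v : V, T.Adj u v →
    (C.induce {x : V | IsLeaf T x ∧ (T.deleteEdges {s(u, v)}).Reachable u x}).Connected

/-- The Halin graph itself: the (edge-disjoint) union of the tree and the outer cycle. -/
def HalinGraph.graph {V : Type*} [Fintype V] (H : HalinGraph V) : SimpleGraph V :=
  H.T ⊔ H.C

/-- Number of edges of a graph. -/
noncomputable def eCount {V : Type*} (G : SimpleGraph V) : ℕ :=
  G.edgeSet.ncard

/-- A graph is `C₄`-free iff it contains no cycle of length `4`. -/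
def C4Free {V : Type*} (G : SimpleGraph V) : Prop :=
  ∀ (v : V) (w : G.Walk v v), w.IsCycle → w.length ≠ 4

/-- A semi-branching vertex of the characteristic tree: a non-leaf with at least one
leaf neighbour and at least two non-leaf neighbours. -/
def SemiBranching {V : Type*} (T : SimpleGraph V) (v : V) : Prop :=
  ¬ IsLeaf T v ∧ (∃ x, T.Adj v x ∧ IsLeaf T x) ∧
    ∃ x y : V, x ≠ y ∧ T.Adj v x ∧ T.Adj v y ∧ ¬ IsLeaf T x ∧ ¬ IsLeaf T y

open Finset

private lemma no_c4 {V : Type*} {G : SimpleGraph V} (hfree : C4Free G) {a b c d : V}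
    (h1 : G.Adj a b) (h2 : G.Adj b c) (h3 : G.Adj c d) (h4 : G.Adj d a)
    (hac : a ≠ c) (hbd : b ≠ d) : False := by
  have hab := h1.ne
  have hbc := h2.ne
  have hcd := h3.ne
  have hda := h4.ne'
  let w : G.Walk a a := .cons h1 (.cons h2 (.cons h3 (.cons h4 .nil)))
  refine hfree a w ?_ (by simp [w])
  rw [Walk.isCycle_def, Walk.isTrail_def]
  refine ⟨?_, by simp [w], ?_⟩
  · simp [w, Sym2.eq_iff]
    aesop
  · simp [w]
    aesop

private lemma reach_or {V : Type*} {T : SimpleGraph V} (hconn : T.Connected)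
    {u v : V} (h : T.Adj u v) (w : V) :
    (T.deleteEdges {s(u,v)}).Reachable u w ∨ (T.deleteEdges {s(u,v)}).Reachable v w := by
  have main : ∀ (a b : V), (T.Walk a b) →
      ((T.deleteEdges {s(u,v)}).Reachable u a ∨ (T.deleteEdges {s(u,v)}).Reachable v a) →
      ((T.deleteEdges {s(u,v)}).Reachable u b ∨ (T.deleteEdges {s(u,v)}).Reachable v b) := by
    intro a b W
    induction W with
    | nil => exact id
    | @cons a c b hac p ih =>
      intro hyp
      apply ih
      by_cases he : s(a,c) = s(u,v)
      · rw [Sym2.eq_iff] at he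
        rcases he with ⟨rfl, rfl⟩ | ⟨rfl, rfl⟩
        · exact Or.inr (Reachable.refl _)
        · exact Or.inl (Reachable.refl _)
      · have hadj : (T.deleteEdges {s(u,v)}).Adj a c := by
          rw [deleteEdges_adj]
          exact ⟨hac, by simpa using he⟩
        rcases hyp with hy | hy
        · exact Or.inl (hy.trans hadj.reachable)
        · exact Or.inr (hy.trans hadj.reachable)
  exact main u w (hconn u w).some (Or.inl (Reachable.refl _))

private lemma not_reach_of_mem_path_edges {V : Type*} {T : SimpleGraph V} (hT : T.IsTree)
    {x y : V} {P : T.Walk x y} (hP : P.IsPath) {e : Sym2 V} (he : e ∈ P.edges) :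
    ¬ (T.deleteEdges {e}).Reachable x y := by
  classical
  intro hr
  obtain ⟨W⟩ := hr
  let W' := W.toPath
  have hsub : ∀ f ∈ (W' : (T.deleteEdges {e}).Walk x y).edges, f ∈ T.edgeSet := by
    intro f hf
    have := Walk.edges_subset_edgeSet _ hf
    rw [edgeSet_deleteEdges] at this
    exact this.1
  have hnotmem : e ∉ (W' : (T.deleteEdges {e}).Walk x y).edges := by
    intro hmem
    have := Walk.edges_subset_edgeSet _ hmem
    rw [edgeSet_deleteEdges] at this
    exact this.2 rfl
  let W'' := (W' : (T.deleteEdges {e}).Walk x y).transfer T hsub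
  have hW'' : W''.IsPath := W'.2.transfer hsub
  have huniq := hT.IsAcyclic.path_unique ⟨W'', hW''⟩ ⟨P, hP⟩
  have : e ∈ W''.edges := by
    have : (⟨W'', hW''⟩ : T.Path x y).1.edges = P.edges := by rw [huniq]
    simpa [this] using he
  rw [Walk.edges_transfer] at this
  exact hnotmem this

private lemma walk_small_cases {V : Type*} {T : SimpleGraph V} {x y : V}
    (P : T.Walk x y) (h : P.length ≤ 3) :
    x = y ∨ T.Adj x y ∨ (∃ a, T.Adj x a ∧ T.Adj a y) ∨
      (∃ a b, T.Adj x a ∧ T.Adj a b ∧ T.Adj b y) := by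
  cases P with
  | nil => exact Or.inl rfl
  | cons h1 q =>
    cases q with
    | nil => exact Or.inr (Or.inl h1)
    | cons h2 r =>
      cases r with
      | nil => exact Or.inr (Or.inr (Or.inl ⟨_, h1, h2⟩))
      | cons h3 s =>
        cases s with
        | nil => exact Or.inr (Or.inr (Or.inr ⟨_, _, h1, h2, h3⟩))
        | cons h4 t => simp [SimpleGraph.Walk.length_cons] at h; omega

private lemma conn_card_le {W : Type*} [Fintype W] {G : SimpleGraph W}
    (h : G.Connected) : Fintype.card W ≤ G.edgeSet.ncard + 1 := by
  classical
  obtain ⟨r⟩ := h.nonempty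
  have key : ∀ v : W, v ≠ r → ∃ u, G.Adj u v ∧ G.dist r u + 1 = G.dist r v := by
    intro v hv
    obtain ⟨p, hp⟩ := h.exists_walk_length_eq_dist v r
    cases p with
    | nil => exact absurd rfl hv
    | @cons _ c _ hadj q =>
      refine ⟨c, hadj.symm, ?_⟩
      have h1 : G.dist r c ≤ q.reverse.length := dist_le _
      have h2 : G.dist r v ≤ G.dist r c + 1 := by
        calc G.dist r v ≤ G.dist r c + G.dist c v := h.dist_triangle
        _ ≤ G.dist r c + 1 := by
            have : G.dist c v ≤ (Walk.cons hadj Walk.nil).reverse.length := dist_le _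
            simpa using this
      have h3 : q.reverse.length = G.dist v r - 1 := by
        simp only [Walk.length_reverse]
        simp [Walk.length_cons] at hp
        omega
      have h4 : G.dist v r = G.dist r v := dist_comm
      have h5 : 0 < G.dist r v := h.pos_dist_of_ne (Ne.symm hv)
      omega
  choose! f hf1 hf2 using key
  have hinj : Set.InjOn (fun v => s(f v, v)) ((univ : Finset W).erase r) := by
    intro v1 h1 v2 h2 heq
    simp only [Sym2.eq_iff] at heq
    rcases heq with ⟨he1, he2⟩ | ⟨he1, he2⟩
    · exact he2
    · have hv1 : v1 ≠ r := by simpa using (Finset.mem_coe.mp h1)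
      have hv2 : v2 ≠ r := by simpa using (Finset.mem_coe.mp h2)
      have a1 := hf2 v1 hv1
      have a2 := hf2 v2 hv2
      rw [he1] at a1
      rw [← he2] at a2
      omega
  have hmaps : ∀ v ∈ (univ : Finset W).erase r, s(f v, v) ∈ G.edgeFinset := by
    intro v hv
    have hv' : v ≠ r := by simpa using hv
    rw [mem_edgeFinset, mem_edgeSet]
    exact hf1 v hv'
  have := Finset.card_le_card_of_injOn _ hmaps hinj
  rw [Finset.card_erase_of_mem (mem_univ r), Finset.card_univ] at this
  have hcard : G.edgeFinset.card = G.edgeSet.ncard := by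
    rw [Set.ncard_eq_toFinset_card']
    congr 1
  omega

private lemma edge_rep {V : Type*} {G : SimpleGraph V} {f : Sym2 V} (hf : f ∈ G.edgeSet) :
    ∃ x y, f = s(x,y) ∧ G.Adj x y := by
  induction f with
  | _ x y => exact ⟨x, y, rfl, hf⟩

open scoped Classical in
private lemma cut_le_two {V : Type*} [Fintype V] (G : SimpleGraph V) (A : Set V)
    (hconn : (G.induce A).Connected)
    (hdeg : ∀ a ∈ A, (G.neighborSet a).ncard = 2) :
    ({f ∈ G.edgeFinset | ∃ x y, f = s(x,y) ∧ x ∈ A ∧ y ∉ A}).card ≤ 2 := by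
  classical
  set At := A.toFinset with hAt
  set inE := ({f ∈ G.edgeFinset | ∀ x ∈ f, x ∈ A} : Finset (Sym2 V)) with hinE
  set cutE := ({f ∈ G.edgeFinset | ∃ x y, f = s(x,y) ∧ x ∈ A ∧ y ∉ A} : Finset (Sym2 V)) with hcutE
  have hdisj : Disjoint inE cutE := by
    rw [Finset.disjoint_left]
    intro f hf1 hf2
    rw [hinE, Finset.mem_filter] at hf1
    rw [hcutE, Finset.mem_filter] at hf2
    obtain ⟨x, y, rfl, hx, hy⟩ := hf2.2
    exact hy (hf1.2 y (Sym2.mem_mk_right x y))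
  have hdc : ∑ a ∈ At, G.degree a = ∑ f ∈ G.edgeFinset, (At.filter (· ∈ f)).card := by
    have h1 : ∀ a, G.degree a = (G.edgeFinset.filter (fun f => a ∈ f)).card := by
      intro a
      rw [← card_incidenceFinset_eq_degree, incidenceFinset_eq_filter]
    calc ∑ a ∈ At, G.degree a
        = ∑ a ∈ At, ∑ f ∈ G.edgeFinset, (if a ∈ f then 1 else 0) := by
          simp only [h1, Finset.card_filter]
      _ = ∑ f ∈ G.edgeFinset, ∑ a ∈ At, (if a ∈ f then 1 else 0) := Finset.sum_comm
      _ = ∑ f ∈ G.edgeFinset, (At.filter (· ∈ f)).card := by simp only [Finset.card_filter]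
  have hdegsum : ∑ a ∈ At, G.degree a = 2 * At.card := by
    rw [Finset.sum_congr rfl (fun a ha => ?_), Finset.sum_const, smul_eq_mul, mul_comm]
    have haA : a ∈ A := by rwa [hAt, Set.mem_toFinset] at ha
    have := hdeg a haA
    rwa [Set.ncard_eq_toFinset_card'] at this
  have hlow : 2 * inE.card + cutE.card ≤ ∑ f ∈ G.edgeFinset, (At.filter (· ∈ f)).card := by
    have hsub : inE ∪ cutE ⊆ G.edgeFinset := by
      apply Finset.union_subset <;> exact Finset.filter_subset _ _
    calc 2 * inE.card + cutE.card
        = ∑ f ∈ inE, 2 + ∑ f ∈ cutE, 1 := by simp [mul_comm]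
      _ ≤ ∑ f ∈ inE, (At.filter (· ∈ f)).card + ∑ f ∈ cutE, (At.filter (· ∈ f)).card := by
          gcongr with f hf f hf
          · rw [hinE, Finset.mem_filter] at hf
            obtain ⟨x, y, rfl, hadj⟩ := edge_rep (mem_edgeFinset.mp hf.1)
            have hx : x ∈ At := by rw [hAt, Set.mem_toFinset]; exact hf.2 x (Sym2.mem_mk_left x y)
            have hy : y ∈ At := by rw [hAt, Set.mem_toFinset]; exact hf.2 y (Sym2.mem_mk_right x y)
            have : At.filter (· ∈ s(x,y)) = {x, y} := by
              ext a
              simp only [Finset.mem_filter, Sym2.mem_iff, Finset.mem_insert, Finset.mem_singleton]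
              constructor
              · rintro ⟨_, h⟩; exact h
              · rintro (rfl | rfl) <;> simp [hx, hy]
            rw [this, Finset.card_pair hadj.ne]
          · rw [hcutE, Finset.mem_filter] at hf
            obtain ⟨x, y, rfl, hx, hy⟩ := hf.2
            have hx' : x ∈ At := by rwa [hAt, Set.mem_toFinset]
            have : At.filter (· ∈ s(x,y)) = {x} := by
              ext a
              simp only [Finset.mem_filter, Sym2.mem_iff, Finset.mem_singleton]
              constructor
              · rintro ⟨ha, rfl | rfl⟩
                · rfl
                · exact absurd (by rwa [hAt, Set.mem_toFinset] at ha) hy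
              · rintro rfl; exact ⟨hx', Or.inl rfl⟩
            rw [this, Finset.card_singleton]
      _ = ∑ f ∈ inE ∪ cutE, (At.filter (· ∈ f)).card := (Finset.sum_union hdisj).symm
      _ ≤ ∑ f ∈ G.edgeFinset, (At.filter (· ∈ f)).card := Finset.sum_le_sum_of_subset hsub
  have hconn' : At.card ≤ inE.card + 1 := by
    have h1 := conn_card_le hconn
    have h2 : Fintype.card ↥A = At.card := (Set.toFinset_card A).symm
    have h3 : (G.induce A).edgeSet.ncard = (G.induce A).edgeFinset.card :=
      Set.ncard_eq_toFinset_card' _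
    have h4 : (G.induce A).edgeFinset.card ≤ inE.card := by
      apply Finset.card_le_card_of_injOn (fun f => Sym2.map Subtype.val f)
      · intro f hf
        obtain ⟨x, y, rfl, hadj⟩ := edge_rep (mem_edgeFinset.mp hf)
        beta_reduce
        rw [Finset.mem_coe, hinE, Finset.mem_filter]
        constructor
        · rw [Sym2.map_pair_eq, mem_edgeFinset, mem_edgeSet]
          exact hadj
        · intro z hz
          rw [Sym2.map_pair_eq, Sym2.mem_iff] at hz
          rcases hz with rfl | rfl
          · exact x.2
          · exact y.2
      · intro f1 _ f2 _ heq
        exact Sym2.map.injective Subtype.val_injective heq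
    omega
  omega


/-- Every `18`-vertex `C₄`-free Halin graph has at most `28` edges. -/
theorem halin_eighteen {V : Type*} [Fintype V] (hcard : Fintype.card V = 18)
    (H : HalinGraph V) (hfree : C4Free H.graph) :
    eCount H.graph ≤ 28 := by
  classical
  have memE : ∀ {G : SimpleGraph V} {x y : V}, s(x,y) ∈ G.edgeSet → G.Adj x y :=
    fun h => h
  have hTree := H.tree_isTree
  have hconnT : H.T.Connected := hTree.isConnected
  -- leaves have a unique neighbour
  have huniq : ∀ {x a b : V}, IsLeaf H.T x → H.T.Adj x a → H.T.Adj x b → a = b := by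
    intro x a b hx ha hb
    obtain ⟨c, hc⟩ := Set.ncard_eq_one.mp hx
    have ha' : a ∈ H.T.neighborSet x := ha
    have hb' : b ∈ H.T.neighborSet x := hb
    rw [hc, Set.mem_singleton_iff] at ha' hb'
    rw [ha', hb']
  -- leaves are not adjacent in the tree
  have hleafadj : ∀ {x y : V}, IsLeaf H.T x → IsLeaf H.T y → H.T.Adj x y → False := by
    intro x y hx hy hxy
    have hclose : ∀ (a b : V), (H.T.Walk a b) → (a = x ∨ a = y) → (b = x ∨ b = y) := by
      intro a b W
      induction W with
      | nil => exact id
      | @cons a c b hac p ih =>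
        intro hyp
        apply ih
        rcases hyp with rfl | rfl
        · exact Or.inr (huniq hx hac hxy)
        · exact Or.inl (huniq hy hac hxy.symm)
    have hall : ∀ z : V, z = x ∨ z = y := fun z =>
      hclose x z (hconnT x z).some (Or.inl rfl)
    have hsub : (univ : Finset V) ⊆ {x, y} := by
      intro z _
      rcases hall z with rfl | rfl <;> simp
    have := Finset.card_le_card hsub
    rw [Finset.card_univ, hcard] at this
    have h2 : ({x, y} : Finset V).card ≤ 2 := Finset.card_insert_le _ _ |>.trans (by simp)
    omega
  -- a neighbour of a leaf is not a leaf
  have hnonleaf : ∀ {x a : V}, IsLeaf H.T x → H.T.Adj x a → ¬ IsLeaf H.T a :=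
    fun hx ha haleaf => hleafadj hx haleaf ha
  -- endpoints of cycle edges are leaves
  have hCleaf : ∀ {x y : V}, H.C.Adj x y → IsLeaf H.T x := by
    intro x y hxy
    have : x ∈ H.C.support := ⟨y, hxy⟩
    rwa [H.support_C, Set.mem_setOf_eq] at this
  -- the leaf finset
  set Lt := ({v | IsLeaf H.T v} : Set V).toFinset with hLt
  set ET := H.T.edgeFinset with hET
  set EC := H.C.edgeFinset with hEC
  -- edge sets are disjoint
  have hdisjTC : Disjoint H.T.edgeSet H.C.edgeSet := by
    rw [Set.disjoint_left]
    intro f hfT hfC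
    obtain ⟨x, y, rfl, hadjC⟩ := edge_rep hfC
    have hadjT : H.T.Adj x y := memE hfT
    exact hleafadj (hCleaf hadjC) (hCleaf hadjC.symm) hadjT
  -- edge count decomposition
  have hsum : eCount H.graph = ET.card + EC.card := by
    show (H.T ⊔ H.C).edgeSet.ncard = _
    rw [edgeSet_sup, Set.ncard_union_eq hdisjTC (Set.toFinite _) (Set.toFinite _),
      Set.ncard_eq_toFinset_card', Set.ncard_eq_toFinset_card']
    congr 1 <;> congr 1 <;> ext <;> simp [hET, hEC]
  -- tree edge count
  have hTcount : ET.card = 17 := by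
    have h := hTree.card_edgeFinset
    rw [hcard] at h
    rw [hET]
    omega
  -- cycle edge count via handshake
  have hCcount : EC.card = Lt.card := by
    have hhs := H.C.sum_degrees_eq_twice_card_edges
    have hdeg : ∀ v : V, H.C.degree v = if IsLeaf H.T v then 2 else 0 := by
      intro v
      split_ifs with hv
      · have hvs : v ∈ H.C.support := by rw [H.support_C]; exact hv
        have h2 := H.two_regular v hvs
        rw [ncDeg, Set.ncard_eq_toFinset_card'] at h2
        exact h2
      · have hemp : H.C.neighborFinset v = ∅ := by
          ext w
          simp only [mem_neighborFinset, Finset.notMem_empty, iff_false]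
          intro hw
          exact hv (by rw [← Set.mem_setOf_eq (p := IsLeaf H.T), ← H.support_C]; exact ⟨w, hw⟩)
        rw [← card_neighborFinset_eq_degree, hemp, Finset.card_empty]
    rw [Finset.sum_congr rfl (fun v _ => hdeg v), Finset.sum_ite, Finset.sum_const,
      Finset.sum_const, smul_eq_mul, smul_eq_mul, mul_zero, add_zero] at hhs
    have hfilter : (univ.filter (fun v => IsLeaf H.T v)) = Lt := by
      ext v
      simp [hLt]
    rw [hfilter] at hhs
    rw [hEC]
    omega
  -- separation and same-parent predicates
  set Sep : Sym2 V → Sym2 V → Prop :=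
    fun e f => ∃ x y, f = s(x,y) ∧ ¬ (H.T.deleteEdges {e}).Reachable x y with hSepDef
  set SP : Sym2 V → Prop :=
    fun f => ∃ x y a, f = s(x,y) ∧ H.T.Adj x a ∧ H.T.Adj y a with hSPDef
  -- lower bound per cycle edge
  have hlowf : ∀ f ∈ EC, (if SP f then 2 else 4) ≤ (ET.filter (fun e => Sep e f)).card := by
    intro f hf
    obtain ⟨x, y, rfl, hadj⟩ := edge_rep (mem_edgeFinset.mp hf)
    have hx := hCleaf hadj
    have hy := hCleaf hadj.symm
    have hxy := hadj.ne
    obtain ⟨P, hPpath⟩ := ((hconnT x y).some).toPath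
    have hsubE : P.edges.toFinset ⊆ ET.filter (fun e => Sep e s(x,y)) := by
      intro e he
      rw [List.mem_toFinset] at he
      rw [Finset.mem_filter]
      refine ⟨?_, x, y, rfl, not_reach_of_mem_path_edges hTree hPpath he⟩
      rw [hET, mem_edgeFinset]
      exact Walk.edges_subset_edgeSet _ he
    have hcardP : P.edges.toFinset.card = P.length := by
      rw [List.toFinset_card_of_nodup hPpath.edges_nodup, Walk.length_edges]
    have hle := Finset.card_le_card hsubE
    rw [hcardP] at hle
    split_ifs with hSP
    · -- need 2 ≤ P.length
      have h2 : 2 ≤ P.length := by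
        by_contra hlen
        push_neg at hlen
        interval_cases h : P.length
        · exact hxy (Walk.eq_of_length_eq_zero h)
        · exact hleafadj hx hy (Walk.adj_of_length_eq_one h)
      omega
    · -- need 4 ≤ P.length
      have h4 : 4 ≤ P.length := by
        by_contra hlen
        push_neg at hlen
        rcases walk_small_cases P (by omega) with rfl | hadjT | ⟨a, h1, h2⟩ | ⟨a, b, h1, h2, h3⟩
        · exact hxy rfl
        · exact hleafadj hx hy hadjT
        · exact hSP ⟨x, y, a, rfl, h1, h2.symm⟩
        · have hanl : ¬ IsLeaf H.T a := hnonleaf hx h1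
          have hbnl : ¬ IsLeaf H.T b := hnonleaf hy h3.symm
          exact no_c4 hfree (Or.inl h1 : H.graph.Adj x a) (Or.inl h2) (Or.inl h3)
            (Or.inr hadj.symm) (fun hxb => hbnl (hxb ▸ hx)) (fun hay => hanl (hay ▸ hy))
      omega
  -- same-parent edges form a matching
  set s := (EC.filter SP).card with hs
  have hmatch : 2 * s ≤ Lt.card := by
    set endpts : Sym2 V → Finset V := fun f => univ.filter (· ∈ f) with hendpts
    have hdisjE : ∀ f1 ∈ EC.filter SP, ∀ f2 ∈ EC.filter SP, f1 ≠ f2 →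
        Disjoint (endpts f1) (endpts f2) := by
      intro f1 hf1 f2 hf2 hne
      rw [Finset.mem_filter] at hf1 hf2
      rw [Finset.disjoint_left]
      intro z hz1 hz2
      rw [hendpts, Finset.mem_filter] at hz1 hz2
      obtain ⟨y1, rfl⟩ := Sym2.mem_iff_exists.mp hz1.2
      obtain ⟨y2, hf2eq⟩ := Sym2.mem_iff_exists.mp hz2.2
      subst hf2eq
      have hC1 : H.C.Adj z y1 := memE (mem_edgeFinset.mp hf1.1)
      have hC2 : H.C.Adj z y2 := memE (mem_edgeFinset.mp hf2.1)
      have hy12 : y1 ≠ y2 := fun h => hne (by rw [h])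
      have hzleaf := hCleaf hC1
      obtain ⟨p1, q1, a1, heq1, hp1, hq1⟩ := hf1.2
      obtain ⟨p2, q2, a2, heq2, hp2, hq2⟩ := hf2.2
      have hza1 : H.T.Adj z a1 ∧ H.T.Adj y1 a1 := by
        rw [Sym2.eq_iff] at heq1
        rcases heq1 with ⟨rfl, rfl⟩ | ⟨rfl, rfl⟩
        · exact ⟨hp1, hq1⟩
        · exact ⟨hq1, hp1⟩
      have hza2 : H.T.Adj z a2 ∧ H.T.Adj y2 a2 := by
        rw [Sym2.eq_iff] at heq2
        rcases heq2 with ⟨rfl, rfl⟩ | ⟨rfl, rfl⟩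
        · exact ⟨hp2, hq2⟩
        · exact ⟨hq2, hp2⟩
      have ha12 : a1 = a2 := huniq hzleaf hza1.1 hza2.1
      subst ha12
      exact no_c4 hfree (Or.inl hza1.2.symm : H.graph.Adj a1 y1)
        (Or.inr hC1.symm) (Or.inr hC2) (Or.inl hza2.2)
        (fun h => (hza1.1.ne' : a1 ≠ z) h) hy12
    have hcard2 : ∀ f ∈ EC.filter SP, (endpts f).card = 2 := by
      intro f hf
      rw [Finset.mem_filter] at hf
      obtain ⟨x, y, rfl, hadj⟩ := edge_rep (mem_edgeFinset.mp hf.1)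
      have : endpts s(x,y) = {x, y} := by
        ext a
        simp [hendpts, Sym2.mem_iff]
      rw [this, Finset.card_pair hadj.ne]
    have hsubL : (EC.filter SP).biUnion endpts ⊆ Lt := by
      intro z hz
      rw [Finset.mem_biUnion] at hz
      obtain ⟨f, hf, hzf⟩ := hz
      rw [Finset.mem_filter] at hf
      rw [hendpts, Finset.mem_filter] at hzf
      obtain ⟨y1, rfl⟩ := Sym2.mem_iff_exists.mp hzf.2
      have : H.C.Adj z y1 := memE (mem_edgeFinset.mp hf.1)
      rw [hLt, Set.mem_toFinset]
      exact hCleaf this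
    have := Finset.card_biUnion hdisjE
    rw [Finset.sum_congr rfl hcard2, Finset.sum_const, smul_eq_mul] at this
    have hle := Finset.card_le_card hsubL
    omega
  -- upper bound per tree edge
  have hup : ∀ e ∈ ET, (EC.filter (fun f => Sep e f)).card ≤ 2 := by
    intro e he
    obtain ⟨u, v, rfl, huv⟩ := edge_rep (mem_edgeFinset.mp he)
    set A := ({x : V | IsLeaf H.T x ∧ (H.T.deleteEdges {s(u, v)}).Reachable u x}) with hA
    have hAconn := H.planar u v huv
    have hAdeg : ∀ a ∈ A, (H.C.neighborSet a).ncard = 2 := by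
      intro a ha
      exact H.two_regular a (by rw [H.support_C]; exact ha.1)
    have hcut := cut_le_two H.C A hAconn hAdeg
    refine le_trans (Finset.card_le_card ?_) hcut
    intro f hf
    simp only [Finset.mem_filter] at hf ⊢
    refine ⟨hf.1, ?_⟩
    obtain ⟨x, y, rfl, hnr⟩ := hf.2
    have hadjC : H.C.Adj x y := memE (mem_edgeFinset.mp hf.1)
    have hxleaf := hCleaf hadjC
    have hyleaf := hCleaf hadjC.symm
    rcases reach_or hconnT huv x with hux | hvx
    · rcases reach_or hconnT huv y with huy | hvy
      · exact absurd (hux.symm.trans huy) hnr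
      · exact ⟨x, y, rfl, ⟨hxleaf, hux⟩, fun hyA => hnr (hux.symm.trans hyA.2)⟩
    · rcases reach_or hconnT huv y with huy | hvy
      · exact ⟨y, x, Sym2.eq_swap, ⟨hyleaf, huy⟩, fun hxA => hnr (hxA.2.symm.trans huy)⟩
      · exact absurd (hvx.symm.trans hvy) hnr
  -- double counting
  set N := ∑ f ∈ EC, (ET.filter (fun e => Sep e f)).card with hN
  have hswap : N = ∑ e ∈ ET, (EC.filter (fun f => Sep e f)).card := by
    rw [hN]
    calc ∑ f ∈ EC, (ET.filter (fun e => Sep e f)).card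
        = ∑ f ∈ EC, ∑ e ∈ ET, (if Sep e f then 1 else 0) := by
          simp only [Finset.card_filter]
      _ = ∑ e ∈ ET, ∑ f ∈ EC, (if Sep e f then 1 else 0) := Finset.sum_comm
      _ = ∑ e ∈ ET, (EC.filter (fun f => Sep e f)).card := by
          simp only [Finset.card_filter]
  have hNup : N ≤ 2 * ET.card := by
    rw [hswap]
    calc ∑ e ∈ ET, (EC.filter (fun f => Sep e f)).card ≤ ∑ e ∈ ET, 2 :=
          Finset.sum_le_sum hup
      _ = 2 * ET.card := by rw [Finset.sum_const, smul_eq_mul, mul_comm]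
  have hNlow : ∑ f ∈ EC, (if SP f then 2 else 4) ≤ N := Finset.sum_le_sum hlowf
  have hsplit : ∑ f ∈ EC, (if SP f then 2 else 4) =
      2 * s + 4 * (EC.filter (fun f => ¬ SP f)).card := by
    rw [Finset.sum_ite, Finset.sum_const, Finset.sum_const, smul_eq_mul, smul_eq_mul,
      mul_comm s 2, mul_comm _ 4]
  have hcards : s + (EC.filter (fun f => ¬ SP f)).card = EC.card :=
    Finset.card_filter_add_card_filter_not _
  -- conclude
  rw [hsum, hTcount]
  have : Lt.card ≤ 11 := by omega
  omega
end

section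
/- There is no 16-vertex C4-free Halin graph whose characteristic tree has a longest path of length exactly 5. -/
open SimpleGraph

section Helpers
variable {V : Type*} {T : SimpleGraph V}


lemma leaf_eq_of_adj {l x y : V} (hl : IsLeaf T l)
    (hx : T.Adj l x) (hy : T.Adj l y) : x = y := by
  obtain ⟨z, hz⟩ := Set.ncard_eq_one.mp hl
  have hx' : x ∈ T.neighborSet l := hx
  have hy' : y ∈ T.neighborSet l := hy
  rw [hz] at hx' hy'
  simp at hx' hy'; rw [hx', hy']

lemma walk_subset {G : SimpleGraph V} (S : Set V)
    (hcl : ∀ a ∈ S, ∀ b, G.Adj a b → b ∈ S) :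
    ∀ {x w : V} (_ : G.Walk x w), x ∈ S → w ∈ S := by
  intro x w p
  induction p with
  | nil => exact id
  | cons h p ih => intro hx; exact ih (hcl _ hx _ h)

lemma c4_of_square {G : SimpleGraph V} (hfree : C4Free G) {a b c d : V}
    (hab : G.Adj a b) (hbc : G.Adj b c) (hcd : G.Adj c d) (hda : G.Adj d a)
    (hac : a ≠ c) (hbd : b ≠ d) : False := by
  refine hfree a (Walk.cons hab (Walk.cons hbc (Walk.cons hcd (Walk.cons hda Walk.nil)))) ?_ (by simp)
  rw [Walk.isCycle_def]
  refine ⟨?_, by simp, ?_⟩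
  · rw [Walk.isTrail_def]
    simp [Sym2.eq_iff, List.nodup_cons, hab.ne, hbc.ne, hcd.ne, hda.ne,
      hac, hbd, hab.ne', hbc.ne', hcd.ne', hda.ne', hac.symm, hbd.symm]
  · simp [List.nodup_cons, hbc.ne, hbd, hcd.ne, hda.ne', hac.symm, hab.ne', hda.ne]

/-- leaves reachable from `x` after deleting the edge to `c` are exactly the
other neighbours of `x`. -/
lemma reach_subset {G : SimpleGraph V} (S : Set V)
    (hcl : ∀ a ∈ S, ∀ b, G.Adj a b → b ∈ S) {x w : V} (hx : x ∈ S)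
    (h : G.Reachable x w) : w ∈ S := by
  obtain ⟨p⟩ := h
  exact walk_subset S hcl p hx

lemma reach_in_delete {x c : V} (hxint : ¬ IsLeaf T x) (hc : T.Adj x c)
    (hch : ∀ w, T.Adj x w → w ≠ c → IsLeaf T w) :
    {w | IsLeaf T w ∧ (T.deleteEdges {s(x, c)}).Reachable x w}
      = T.neighborSet x \ {c} := by
  ext w
  simp only [Set.mem_setOf_eq, Set.mem_diff, mem_neighborSet, Set.mem_singleton_iff]
  constructor
  · rintro ⟨hwl, hreach⟩
    have hsub : w ∈ insert x (T.neighborSet x \ {c}) := by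
      refine reach_subset _ ?_ (by simp) hreach
      intro a ha b hb
      rw [deleteEdges_adj] at hb
      obtain ⟨hab, hne⟩ := hb
      simp only [Set.mem_insert_iff, Set.mem_diff, mem_neighborSet,
        Set.mem_singleton_iff] at ha ⊢
      rcases ha with rfl | ⟨hax, hac2⟩
      · refine Or.inr ⟨hab, ?_⟩
        rintro rfl
        simp at hne
      · have haleaf : IsLeaf T a := hch a hax hac2
        exact Or.inl (leaf_eq_of_adj haleaf hab hax.symm)
    simp only [Set.mem_insert_iff, Set.mem_diff, mem_neighborSet,
      Set.mem_singleton_iff] at hsub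
    rcases hsub with rfl | h
    · exact absurd hwl hxint
    · exact h
  · rintro ⟨hadj, hne⟩
    refine ⟨hch w hadj hne, Adj.reachable ?_⟩
    rw [deleteEdges_adj]
    refine ⟨hadj, ?_⟩
    simp [Sym2.eq_iff, hne, hc.ne]

lemma three_of_ncard {α : Type*} {s : Set α} (hfin : s.Finite) (h3 : 3 ≤ s.ncard) :
    ∃ a b c, a ∈ s ∧ b ∈ s ∧ c ∈ s ∧ a ≠ b ∧ a ≠ c ∧ b ≠ c := by
  obtain ⟨a, ha⟩ := Set.nonempty_of_ncard_ne_zero (s := s) (by omega)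
  have h1' : 1 < s.ncard := by omega
  obtain ⟨b, hb, hba⟩ := Set.exists_ne_of_one_lt_ncard h1' a
  have h1 : (s \ {a}).ncard + 1 = s.ncard := Set.ncard_diff_singleton_add_one ha hfin
  have hb' : b ∈ s \ {a} := ⟨hb, hba⟩
  have h2 : ((s \ {a}) \ {b}).ncard + 1 = (s \ {a}).ncard :=
    Set.ncard_diff_singleton_add_one (s := s \ {a}) hb' hfin.diff
  obtain ⟨c, hc⟩ := Set.nonempty_of_ncard_ne_zero (s := (s \ {a}) \ {b}) (by omega)
  exact ⟨a, b, c, ha, hb, hc.1.1, hba.symm, fun h => hc.1.2 h.symm, fun h => hc.2 h.symm⟩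


lemma exists_crossing_walk {W : Type*} {G : SimpleGraph W} {P : W → Prop} :
    ∀ {a b : W} (_ : G.Walk a b), ¬ P a → P b → ∃ x y, G.Adj x y ∧ ¬ P x ∧ P y := by
  intro a b p
  induction p with
  | nil => intro h1 h2; exact absurd h2 h1
  | @cons u m w h p ih =>
    intro h1 h2
    by_cases hm : P m
    · exact ⟨u, m, h, h1, hm⟩
    · exact ih hm h2

lemma adj_or_chain {W : Type*} {G : SimpleGraph W} {a b : W} (h : G.Reachable a b)
    (hne : a ≠ b) :
    G.Adj a b ∨ ∃ x y z, G.Adj x y ∧ G.Adj y z ∧ x ≠ z := by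
  classical
  obtain ⟨w⟩ := h
  obtain ⟨p, hp⟩ := w.toPath
  cases p with
  | nil => exact absurd rfl hne
  | @cons _ m _ h1 q =>
    cases q with
    | nil => exact Or.inl h1
    | @cons _ m2 _ h2 r =>
      refine Or.inr ⟨a, m, m2, h1, h2, ?_⟩
      intro hazz
      subst hazz
      simp [Walk.isPath_def, List.nodup_cons] at hp

lemma chain_of_three {W : Type*} {G : SimpleGraph W} (hc : G.Connected)
    {a b c : W} (hab : a ≠ b) (hac : a ≠ c) (hbc : b ≠ c) :
    ∃ x y z, G.Adj x y ∧ G.Adj y z ∧ x ≠ z := by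
  rcases adj_or_chain (hc.preconnected a b) hab with h1 | h
  · rcases adj_or_chain (hc.preconnected a c) hac with h2 | h
    · exact ⟨b, a, c, h1.symm, h2, hbc⟩
    · exact h
  · exact h


lemma not_leaf_of_two {v x y : V} (hx : T.Adj v x) (hy : T.Adj v y)
    (hne : x ≠ y) : ¬ IsLeaf T v := fun hl => hne (leaf_eq_of_adj hl hx hy)

lemma walk_eq (ht : T.IsTree) {a b : V} (p q : T.Walk a b)
    (hp : p.IsPath) (hq : q.IsPath) : p = q := by
  have := isAcyclic_iff_path_unique.mp ht.IsAcyclic (⟨p, hp⟩ : T.Path a b) ⟨q, hq⟩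
  exact congrArg Subtype.val this

lemma exists_second_nbr
    (hdeg : ∀ v, ¬ IsLeaf T v → 3 ≤ ncDeg T v)
    {y : V} (hyl : ¬ IsLeaf T y) (x : V) : ∃ z, T.Adj y z ∧ z ≠ x := by
  have h3 : 3 ≤ (T.neighborSet y).ncard := hdeg y hyl
  obtain ⟨z, hz, hzx⟩ := Set.exists_ne_of_one_lt_ncard (by omega : 1 < (T.neighborSet y).ncard) x
  exact ⟨z, hz, hzx⟩

lemma children_leaf (ht : T.IsTree)
    (hdeg : ∀ v, ¬ IsLeaf T v → 3 ≤ ncDeg T v)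
    (hmax : ∀ (a b : V) (p : T.Walk a b), p.IsPath → p.length ≤ 5)
    {v2 v3 v4 v5 : V} (h23 : T.Adj v2 v3) (h34 : T.Adj v3 v4) (h45 : T.Adj v4 v5)
    (h24 : v2 ≠ v4) (h25 : v2 ≠ v5) (h35 : v3 ≠ v5)
    {x : V} (hx : T.Adj v2 x) (hx3 : x ≠ v3)
    {y : V} (hxy : T.Adj x y) (hy2 : y ≠ v2) : IsLeaf T y := by
  by_contra hyl
  have hx2 : x ≠ v2 := hx.ne'
  have hx4 : x ≠ v4 := by
    intro h
    have hx' : T.Adj v2 v4 := h ▸ hx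
    have e1 : (Walk.cons hx' Walk.nil : T.Walk v2 v4).IsPath := by simp [hx'.ne]
    have e2 : (Walk.cons h23 (Walk.cons h34 Walk.nil) : T.Walk v2 v4).IsPath := by
      simp [Walk.isPath_def, h23.ne, h34.ne, h24]
    have := congrArg Walk.length (walk_eq ht _ _ e1 e2)
    simp at this
  have hx5 : x ≠ v5 := by
    intro h
    have hx' : T.Adj v2 v5 := h ▸ hx
    have e1 : (Walk.cons hx' Walk.nil : T.Walk v2 v5).IsPath := by simp [hx'.ne]
    have e2 : (Walk.cons h23 (Walk.cons h34 (Walk.cons h45 Walk.nil)) : T.Walk v2 v5).IsPath := by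
      simp [Walk.isPath_def, h23.ne, h34.ne, h45.ne, h24, h25, h35]
    have := congrArg Walk.length (walk_eq ht _ _ e1 e2)
    simp at this
  have hyx : y ≠ x := hxy.ne'
  have hy3 : y ≠ v3 := by
    intro h
    have h' : T.Adj x v3 := h ▸ hxy
    have e1 : (Walk.cons h23 Walk.nil : T.Walk v2 v3).IsPath := by simp [h23.ne]
    have e2 : (Walk.cons hx (Walk.cons h' Walk.nil) : T.Walk v2 v3).IsPath := by
      simp [Walk.isPath_def, hx.ne, h'.ne, h23.ne]
    have := congrArg Walk.length (walk_eq ht _ _ e1 e2)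
    simp at this
  have hy4 : y ≠ v4 := by
    intro h
    have h' : T.Adj x v4 := h ▸ hxy
    have e1 : (Walk.cons h23 (Walk.cons h34 Walk.nil) : T.Walk v2 v4).IsPath := by
      simp [Walk.isPath_def, h23.ne, h34.ne, h24]
    have e2 : (Walk.cons hx (Walk.cons h' Walk.nil) : T.Walk v2 v4).IsPath := by
      simp [Walk.isPath_def, hx.ne, h'.ne, h24]
    have := congrArg Walk.support (walk_eq ht _ _ e1 e2)
    simp at this
    exact hx3 this.symm
  have hy5 : y ≠ v5 := by
    intro h
    have h' : T.Adj x v5 := h ▸ hxy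
    have e1 : (Walk.cons h23 (Walk.cons h34 (Walk.cons h45 Walk.nil)) : T.Walk v2 v5).IsPath := by
      simp [Walk.isPath_def, h23.ne, h34.ne, h45.ne, h24, h25, h35]
    have e2 : (Walk.cons hx (Walk.cons h' Walk.nil) : T.Walk v2 v5).IsPath := by
      simp [Walk.isPath_def, hx.ne, h'.ne, h25]
    have := congrArg Walk.length (walk_eq ht _ _ e1 e2)
    simp at this
  obtain ⟨z, hyz, hzx⟩ := exists_second_nbr hdeg hyl x
  have hzy : z ≠ y := hyz.ne'
  have hz2 : z ≠ v2 := by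
    intro h
    have h' : T.Adj y v2 := h ▸ hyz
    have e1 : (Walk.cons hx (Walk.cons hxy Walk.nil) : T.Walk v2 y).IsPath := by
      simp [Walk.isPath_def, hx.ne, hxy.ne, hy2.symm]
    have e2 : (Walk.cons h'.symm Walk.nil : T.Walk v2 y).IsPath := by simp [hy2.symm]
    have := congrArg Walk.length (walk_eq ht _ _ e1 e2)
    simp at this
  have hz3 : z ≠ v3 := by
    intro h
    have h' : T.Adj y v3 := h ▸ hyz
    have e1 : (Walk.cons h23 Walk.nil : T.Walk v2 v3).IsPath := by simp [h23.ne]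
    have e2 : (Walk.cons hx (Walk.cons hxy (Walk.cons h' Walk.nil)) : T.Walk v2 v3).IsPath := by
      simp [Walk.isPath_def, hx.ne, hxy.ne, h'.ne, hy2.symm, hx2, hx3, hy3, h23.ne]
    have := congrArg Walk.length (walk_eq ht _ _ e1 e2)
    simp at this
  have hz4 : z ≠ v4 := by
    intro h
    have h' : T.Adj y v4 := h ▸ hyz
    have e1 : (Walk.cons h23 (Walk.cons h34 Walk.nil) : T.Walk v2 v4).IsPath := by
      simp [Walk.isPath_def, h23.ne, h34.ne, h24]
    have e2 : (Walk.cons hx (Walk.cons hxy (Walk.cons h' Walk.nil)) : T.Walk v2 v4).IsPath := by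
      simp [Walk.isPath_def, hx.ne, hxy.ne, h'.ne, hy2.symm, hx2, hx4, hy4, h24]
    have := congrArg Walk.length (walk_eq ht _ _ e1 e2)
    simp at this
  have hz5 : z ≠ v5 := by
    intro h
    have h' : T.Adj y v5 := h ▸ hyz
    have e1 : (Walk.cons h23 (Walk.cons h34 (Walk.cons h45 Walk.nil)) : T.Walk v2 v5).IsPath := by
      simp [Walk.isPath_def, h23.ne, h34.ne, h45.ne, h24, h25, h35]
    have e2 : (Walk.cons hx (Walk.cons hxy (Walk.cons h' Walk.nil)) : T.Walk v2 v5).IsPath := by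
      simp [Walk.isPath_def, hx.ne, hxy.ne, h'.ne, hy2.symm, hx2, hx5, hy5, h25]
    have := congrArg Walk.support (walk_eq ht _ _ e1 e2)
    simp at this
    exact hx3 this.1.symm
  have hW : (Walk.cons hyz.symm (Walk.cons hxy.symm (Walk.cons hx.symm
      (Walk.cons h23 (Walk.cons h34 (Walk.cons h45 Walk.nil))))) : T.Walk z v5).IsPath := by
    simp [Walk.isPath_def, hzy, hzx, hz2, hz3, hz4, hz5, hyx, hy2, hy3, hy4, hy5,
      hx2, hx3, hx4, hx5, h23.ne, h34.ne, h45.ne, h24, h25, h35]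
  have := hmax _ _ _ hW
  simp at this

lemma no_triangle (ht : T.IsTree) {a b c : V} (hab : T.Adj a b) (hbc : T.Adj b c)
    (hac : T.Adj a c) : False := by
  have e1 : (SimpleGraph.Walk.cons hac SimpleGraph.Walk.nil : T.Walk a c).IsPath := by
    simp [hac.ne]
  have e2 : (SimpleGraph.Walk.cons hab (SimpleGraph.Walk.cons hbc SimpleGraph.Walk.nil) :
      T.Walk a c).IsPath := by
    simp [SimpleGraph.Walk.isPath_def, hab.ne, hbc.ne, hac.ne]
  have := congrArg SimpleGraph.Walk.length (walk_eq ht _ _ e1 e2)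
  simp at this

lemma walk5 {G : SimpleGraph V} {a b : V} (p : G.Walk a b) (h5 : p.length = 5) :
    ∃ (v1 v2 v3 v4 : V) (h1 : G.Adj a v1) (h2 : G.Adj v1 v2) (h3 : G.Adj v2 v3)
      (h4 : G.Adj v3 v4) (h5' : G.Adj v4 b),
      p = SimpleGraph.Walk.cons h1 (SimpleGraph.Walk.cons h2 (SimpleGraph.Walk.cons h3
        (SimpleGraph.Walk.cons h4 (SimpleGraph.Walk.cons h5' SimpleGraph.Walk.nil)))) := by
  cases p with
  | nil => simp at h5
  | cons h1 q =>
    cases q with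
    | nil => simp at h5
    | cons h2 r =>
      cases r with
      | nil => simp at h5
      | cons h3 t =>
        cases t with
        | nil => simp at h5
        | cons h4 u =>
          cases u with
          | nil => simp at h5
          | cons h5' w =>
            cases w with
            | nil => exact ⟨_, _, _, _, h1, h2, h3, h4, h5', rfl⟩
            | cons h6 z => simp [SimpleGraph.Walk.length_cons] at h5

end Helpers

section Halin
variable {V : Type*} [Fintype V]

lemma graph_adj_of_T (H : HalinGraph V) {a b : V} (h : H.T.Adj a b) : H.graph.Adj a b := by
  show (H.T ⊔ H.C).Adj a b
  rw [sup_adj]; exact Or.inl h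

lemma graph_adj_of_C (H : HalinGraph V) {a b : V} (h : H.C.Adj a b) : H.graph.Adj a b := by
  show (H.T ⊔ H.C).Adj a b
  rw [sup_adj]; exact Or.inr h

lemma two_children (H : HalinGraph V) (hfree : C4Free H.graph)
    {x c : V} (hxc : H.T.Adj x c) (hxint : ¬ IsLeaf H.T x)
    (hch : ∀ w, H.T.Adj x w → w ≠ c → IsLeaf H.T w) :
    (H.T.neighborSet x \ {c}).ncard = 2 := by
  have hA := H.planar x c hxc
  rw [show {x_1 | IsLeaf H.T x_1 ∧ (H.T.deleteEdges {s(x, c)}).Reachable x x_1}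
      = H.T.neighborSet x \ {c} from reach_in_delete hxint hxc hch] at hA
  have h3' : 3 ≤ (H.T.neighborSet x).ncard := H.nonleaf_degree x hxint
  have hd : (H.T.neighborSet x \ {c}).ncard + 1 = (H.T.neighborSet x).ncard :=
    Set.ncard_diff_singleton_add_one (show c ∈ H.T.neighborSet x from hxc) (Set.toFinite _)
  by_contra hne
  have h3 : 3 ≤ (H.T.neighborSet x \ {c}).ncard := by omega
  obtain ⟨a, b, c', ha, hb, hc', hab, hac', hbc'⟩ := three_of_ncard (Set.toFinite _) h3
  obtain ⟨l1, l2, l3, h12, h23, h13⟩ :=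
    chain_of_three hA (a := ⟨a, ha⟩) (b := ⟨b, hb⟩) (c := ⟨c', hc'⟩)
      (by simpa using hab) (by simpa using hac') (by simpa using hbc')
  have hC12 : H.C.Adj ↑l1 ↑l2 := h12
  have hC23 : H.C.Adj ↑l2 ↑l3 := h23
  have hc13 : (l1 : V) ≠ ↑l3 := fun h => h13 (Subtype.ext h)
  have hT1 : H.T.Adj x ↑l1 := l1.2.1
  have hT2 : H.T.Adj x ↑l2 := l2.2.1
  have hT3 : H.T.Adj x ↑l3 := l3.2.1
  exact c4_of_square hfree (graph_adj_of_T H hT1) (graph_adj_of_C H hC12)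
    (graph_adj_of_C H hC23) (graph_adj_of_T H hT3.symm) hT2.ne hc13

lemma no_leaf_child (H : HalinGraph V) (hfree : C4Free H.graph)
    (hmax : ∀ (a b : V) (p : H.T.Walk a b), p.IsPath → p.length ≤ 5)
    {v0 v1 v2 v3 v4 v5 : V}
    (h01 : H.T.Adj v0 v1) (h12 : H.T.Adj v1 v2) (h23 : H.T.Adj v2 v3)
    (h34 : H.T.Adj v3 v4) (h45 : H.T.Adj v4 v5)
    (h02 : v0 ≠ v2) (h13 : v1 ≠ v3) (h24 : v2 ≠ v4) (h25 : v2 ≠ v5) (h35 : v3 ≠ v5)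
    {l : V} (hladj : H.T.Adj v2 l) (hl : IsLeaf H.T l) : False := by
  have ht := H.tree_isTree
  have hdeg := H.nonleaf_degree
  have hch := fun {x : V} (hx : H.T.Adj v2 x) (hx3 : x ≠ v3) {y : V} (hxy : H.T.Adj x y)
      (hy2 : y ≠ v2) => children_leaf ht hdeg hmax h23 h34 h45 h24 h25 h35 hx hx3 hxy hy2
  have hv2int : ¬ IsLeaf H.T v2 := not_leaf_of_two h12.symm h23 h13
  have hv3int : ¬ IsLeaf H.T v3 := not_leaf_of_two h23.symm h34 h24
  have hv1int : ¬ IsLeaf H.T v1 := not_leaf_of_two h01.symm h12 h02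
  have hl3 : l ≠ v3 := fun h => hv3int (h ▸ hl)
  have hv0leaf : IsLeaf H.T v0 := hch h12.symm h13 h01.symm h02
  have hB := H.planar v2 v3 h23
  set B : Set V := {w | IsLeaf H.T w ∧ (H.T.deleteEdges {s(v2, v3)}).Reachable v2 w} with hBdef
  have hlB : l ∈ B := by
    refine ⟨hl, Adj.reachable ?_⟩
    rw [deleteEdges_adj]
    exact ⟨hladj, by simp [Sym2.eq_iff, hl3, h23.ne]⟩
  have hv0B : v0 ∈ B := by
    have e1 : (H.T.deleteEdges {s(v2, v3)}).Adj v2 v1 := by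
      rw [deleteEdges_adj]; exact ⟨h12.symm, by simp [Sym2.eq_iff, h13, h12.ne', h23.ne]⟩
    have e2 : (H.T.deleteEdges {s(v2, v3)}).Adj v1 v0 := by
      rw [deleteEdges_adj]; exact ⟨h01.symm, by simp [Sym2.eq_iff, h12.ne, h02]⟩
    exact ⟨hv0leaf, e1.reachable.trans e2.reachable⟩
  have hPv0 : ¬ H.T.Adj v2 v0 := by
    intro h
    exact h12.ne' (leaf_eq_of_adj hv0leaf h.symm h01)
  -- membership characterisation of B
  have hmem : ∀ w, w ∈ B → ¬ H.T.Adj v2 w →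
      ∃ t, H.T.Adj v2 t ∧ t ≠ v3 ∧ ¬ IsLeaf H.T t ∧ H.T.Adj t w := by
    intro w hwB hwadj
    have hsub : w ∈ insert v2 ({w | H.T.Adj v2 w ∧ w ≠ v3} ∪
        {w | ∃ t, H.T.Adj v2 t ∧ t ≠ v3 ∧ ¬ IsLeaf H.T t ∧ H.T.Adj t w}) := by
      refine reach_subset _ ?_ (by simp) hwB.2
      intro a ha b hb
      rw [deleteEdges_adj] at hb
      obtain ⟨hab, hne⟩ := hb
      simp only [Set.mem_insert_iff, Set.mem_union, Set.mem_setOf_eq] at ha ⊢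
      rcases ha with rfl | ⟨ha2, ha3⟩ | ⟨t, ht2, ht3, htint, hta⟩
      · refine Or.inr (Or.inl ⟨hab, ?_⟩)
        rintro rfl
        simp at hne
      · by_cases haleaf : IsLeaf H.T a
        · exact Or.inl (leaf_eq_of_adj haleaf hab ha2.symm)
        · exact Or.inr (Or.inr ⟨a, ha2, ha3, haleaf, hab⟩)
      · by_cases hav2 : a = v2
        · subst hav2
          refine Or.inr (Or.inl ⟨hab, ?_⟩)
          rintro rfl
          simp at hne
        · have haleaf : IsLeaf H.T a := hch ht2 ht3 hta hav2
          have hbt : b = t := leaf_eq_of_adj haleaf hab hta.symm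
          exact Or.inr (Or.inl (hbt ▸ ⟨ht2, ht3⟩))
    simp only [Set.mem_insert_iff, Set.mem_union, Set.mem_setOf_eq] at hsub
    rcases hsub with rfl | ⟨h2, _⟩ | h
    · exact absurd hwB.1 hv2int
    · exact absurd h2 hwadj
    · exact h
  -- crossing edge
  obtain ⟨w⟩ := hB.preconnected ⟨v0, hv0B⟩ ⟨l, hlB⟩
  obtain ⟨x, y, hxy, hPx, hPy⟩ :=
    exists_crossing_walk (P := fun (w : ↥B) => H.T.Adj v2 ↑w) w hPv0 hladj
  obtain ⟨t, ht2, _, htint, htx⟩ := hmem x.1 x.2 hPx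
  have hCyx : H.C.Adj ↑y ↑x := hxy.symm
  exact c4_of_square hfree (graph_adj_of_T H hPy) (graph_adj_of_C H hCyx)
    (graph_adj_of_T H htx.symm) (graph_adj_of_T H ht2.symm)
    (fun h => hv2int (h ▸ x.2.1)) (fun h => htint (h ▸ y.2.1))

end Halin

/-- There is no `16`-vertex `C₄`-free Halin graph whose characteristic tree has a
longest path of length exactly `5`. -/
theorem halin_sixteen_no_longest_five {V : Type*} [Fintype V]
    (hcard : Fintype.card V = 16) (H : HalinGraph V) (hfree : C4Free H.graph)
    (hex : ∃ (a b : V) (p : H.T.Walk a b), p.IsPath ∧ p.length = 5)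
    (hmax : ∀ (a b : V) (p : H.T.Walk a b), p.IsPath → p.length ≤ 5) :
    False := by
  classical
  obtain ⟨v0, v5, p, hp, hlen⟩ := hex
  obtain ⟨v1, v2, v3, v4, h01, h12, h23, h34, h45, rfl⟩ := walk5 p hlen
  rw [SimpleGraph.Walk.isPath_def] at hp
  simp only [SimpleGraph.Walk.support_cons, SimpleGraph.Walk.support_nil, List.nodup_cons,
    List.mem_cons, List.mem_singleton, List.not_mem_nil, or_false, not_or] at hp
  obtain ⟨⟨h01', h02, h03, h04, h05⟩, ⟨h12', h13, h14, h15⟩, ⟨h23', h24, h25⟩,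
    ⟨h34', h35⟩, h45', -, -⟩ := hp
  have ht := H.tree_isTree
  have hdeg := H.nonleaf_degree
  have hch2 : ∀ x : V, H.T.Adj v2 x → x ≠ v3 → ∀ y : V, H.T.Adj x y → y ≠ v2 →
      IsLeaf H.T y :=
    fun _ hx hx3 _ hxy hy2 => children_leaf ht hdeg hmax h23 h34 h45 h24 h25 h35 hx hx3 hxy hy2
  have hch3 : ∀ x : V, H.T.Adj v3 x → x ≠ v2 → ∀ y : V, H.T.Adj x y → y ≠ v3 →
      IsLeaf H.T y :=
    fun _ hx hx2 _ hxy hy3 => children_leaf ht hdeg hmax h23.symm h12.symm h01.symm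
      (Ne.symm h13) (Ne.symm h03) (Ne.symm h02) hx hx2 hxy hy3
  have hnolc2 : ∀ l, H.T.Adj v2 l → ¬ IsLeaf H.T l := fun l h hl =>
    no_leaf_child H hfree hmax h01 h12 h23 h34 h45 h02 h13 h24 h25 h35 h hl
  have hnolc3 : ∀ l, H.T.Adj v3 l → ¬ IsLeaf H.T l := fun l h hl =>
    no_leaf_child H hfree hmax h45.symm h34.symm h23.symm h12.symm h01.symm
      (Ne.symm h35) (Ne.symm h24) (Ne.symm h13) (Ne.symm h03) (Ne.symm h02) h hl
  set Xf : Finset V :=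
    Finset.univ.filter (fun x => (H.T.Adj v2 x ∨ H.T.Adj v3 x) ∧ x ≠ v2 ∧ x ≠ v3) with hXf
  set chf : V → Finset V :=
    fun x => Finset.univ.filter (fun w => H.T.Adj x w ∧ w ≠ v2 ∧ w ≠ v3) with hchf
  have hXadj : ∀ x ∈ Xf, (H.T.Adj v2 x ∨ H.T.Adj v3 x) ∧ x ≠ v2 ∧ x ≠ v3 := by
    intro x hx
    simpa [hXf] using hx
  have hchmem : ∀ x w, w ∈ chf x ↔ H.T.Adj x w ∧ w ≠ v2 ∧ w ≠ v3 := by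
    intro x w; simp [hchf]
  have hXint : ∀ x ∈ Xf, ¬ IsLeaf H.T x := by
    intro x hx
    rcases (hXadj x hx).1 with h | h
    exacts [hnolc2 x h, hnolc3 x h]
  have hchleaf : ∀ x ∈ Xf, ∀ w ∈ chf x, IsLeaf H.T w := by
    intro x hx w hw
    obtain ⟨hor, hx2, hx3⟩ := hXadj x hx
    rw [hchmem] at hw
    rcases hor with h | h
    · exact hch2 _ h hx3 _ hw.1 hw.2.1
    · exact hch3 _ h hx2 _ hw.1 hw.2.2
  have hcard2 : ∀ x ∈ Xf, (chf x).card = 2 := by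
    intro x hx
    obtain ⟨hor, hx2, hx3⟩ := hXadj x hx
    rcases hor with h | h
    · have h2 := two_children H hfree h.symm (hnolc2 x h)
        (fun w hw hwne => hch2 _ h hx3 _ hw hwne)
      have hset : (↑(chf x) : Set V) = H.T.neighborSet x \ {v2} := by
        ext w
        simp only [Finset.mem_coe, hchmem, Set.mem_diff, mem_neighborSet,
          Set.mem_singleton_iff]
        constructor
        · rintro ⟨hadj, h2', _⟩; exact ⟨hadj, h2'⟩
        · rintro ⟨hadj, h2'⟩
          refine ⟨hadj, h2', ?_⟩
          rintro rfl
          exact no_triangle ht h hadj h23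
      calc (chf x).card = (↑(chf x) : Set V).ncard := (Set.ncard_coe_finset _).symm
        _ = 2 := by rw [hset]; exact h2
    · have h2 := two_children H hfree h.symm (hnolc3 x h)
        (fun w hw hwne => hch3 _ h hx2 _ hw hwne)
      have hset : (↑(chf x) : Set V) = H.T.neighborSet x \ {v3} := by
        ext w
        simp only [Finset.mem_coe, hchmem, Set.mem_diff, mem_neighborSet,
          Set.mem_singleton_iff]
        constructor
        · rintro ⟨hadj, _, h3'⟩; exact ⟨hadj, h3'⟩
        · rintro ⟨hadj, h3'⟩
          refine ⟨hadj, ?_, h3'⟩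
          rintro rfl
          exact no_triangle ht h23 h hadj.symm
      calc (chf x).card = (↑(chf x) : Set V).ncard := (Set.ncard_coe_finset _).symm
        _ = 2 := by rw [hset]; exact h2
  have hdisjf : ∀ x ∈ Xf, ∀ y ∈ Xf, x ≠ y → Disjoint (chf x) (chf y) := by
    intro x hx y hy hne
    rw [Finset.disjoint_left]
    intro w hwx hwy
    have hlw := hchleaf x hx w hwx
    rw [hchmem] at hwx hwy
    exact hne (leaf_eq_of_adj hlw hwx.1.symm hwy.1.symm)
  set Gf : Finset V := Xf.biUnion chf with hGf
  set F : Finset V := insert v2 (insert v3 (Xf ∪ Gf)) with hF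
  have hFmem : ∀ w : V, w ∈ F ↔ w = v2 ∨ w = v3 ∨ w ∈ Xf ∨ w ∈ Gf := by
    intro w; simp [hF, Finset.mem_insert, Finset.mem_union, or_assoc]
  have hclosed : ∀ a ∈ (↑F : Set V), ∀ b, H.T.Adj a b → b ∈ (↑F : Set V) := by
    intro a ha b hab
    rw [Finset.mem_coe, hFmem] at ha
    rw [Finset.mem_coe, hFmem]
    rcases ha with rfl | rfl | ha | ha
    · by_cases hb3 : b = v3
      · exact Or.inr (Or.inl hb3)
      · refine Or.inr (Or.inr (Or.inl ?_))
        simp [hXf]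
        exact ⟨Or.inl hab, hab.ne', hb3⟩
    · by_cases hb2 : b = v2
      · exact Or.inl hb2
      · refine Or.inr (Or.inr (Or.inl ?_))
        simp [hXf]
        exact ⟨Or.inr hab, hb2, hab.ne'⟩
    · by_cases hb2 : b = v2
      · exact Or.inl hb2
      by_cases hb3 : b = v3
      · exact Or.inr (Or.inl hb3)
      refine Or.inr (Or.inr (Or.inr ?_))
      rw [hGf, Finset.mem_biUnion]
      exact ⟨a, ha, (hchmem a b).mpr ⟨hab, hb2, hb3⟩⟩
    · rw [hGf, Finset.mem_biUnion] at ha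
      obtain ⟨x, hxX, haw⟩ := ha
      have hla := hchleaf x hxX a haw
      rw [hchmem] at haw
      have : b = x := leaf_eq_of_adj hla hab haw.1.symm
      exact Or.inr (Or.inr (Or.inl (this ▸ hxX)))
  have hFuniv : F = Finset.univ := by
    apply Finset.eq_univ_of_forall
    intro w
    have hreach := (ht.isConnected.preconnected v2 w)
    obtain ⟨q⟩ := hreach
    have : w ∈ (↑F : Set V) := walk_subset _ hclosed q (by simp [hF])
    simpa using this
  -- cards
  have hv2nGf : v2 ∉ Gf := by
    rw [hGf, Finset.mem_biUnion]
    rintro ⟨x, hxX, hmem⟩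
    exact ((hchmem x v2).mp hmem).2.1 rfl
  have hv3nGf : v3 ∉ Gf := by
    rw [hGf, Finset.mem_biUnion]
    rintro ⟨x, hxX, hmem⟩
    exact ((hchmem x v3).mp hmem).2.2 rfl
  have hv2nXf : v2 ∉ Xf := fun h => (hXadj v2 h).2.1 rfl
  have hv3nXf : v3 ∉ Xf := fun h => (hXadj v3 h).2.2 rfl
  have hXGdisj : Disjoint Xf Gf := by
    rw [Finset.disjoint_left]
    intro w hwX hwG
    rw [hGf, Finset.mem_biUnion] at hwG
    obtain ⟨x, hxX, hmem⟩ := hwG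
    exact hXint w hwX (hchleaf x hxX w hmem)
  have hGcard : Gf.card = 2 * Xf.card := by
    rw [hGf, Finset.card_biUnion hdisjf]
    rw [Finset.sum_congr rfl hcard2, Finset.sum_const, smul_eq_mul, mul_comm]
  have h16 : (Finset.univ : Finset V).card = 16 := by rw [Finset.card_univ, hcard]
  rw [← hFuniv, hF] at h16
  rw [Finset.card_insert_of_notMem (by simp [Finset.mem_insert, Finset.mem_union, h23',
      hv2nXf, hv2nGf]), Finset.card_insert_of_notMem (by simp [Finset.mem_union, hv3nXf,
      hv3nGf]), Finset.card_union_of_disjoint hXGdisj, hGcard] at h16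
  omega
end
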